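/- arXiv:2101.05713 — 2 statements merged into one kernel-verified Lean document; each statement's English description precedes it below -/
import Mathlib

section
/- For all integers m ≥ 1, r ≥ 0, and k ≥ 0, one has B_k(r/m) = Σ_{j=0}^{k} (-1)^j · (j!/(j+1)) · W_{m,r}(k, j)/m^{k-j}, where B_k(x) is the k-th Bernoulli polynomial and W_{m,r}(k,j) are the r-Whitney numbers of the second kind. -/
open Polynomial Finset
open Polynomial Finset

noncomputable def Dop : Module.End ℚ (Polynomial ℚ) :=
  (Polynomial.taylor (1 : ℚ)) - LinearMap.id

lemma Dop_apply (p : Polynomial ℚ) : Dop p = taylor 1 p - p := rfl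

lemma Dop_eval (p : Polynomial ℚ) (x : ℚ) :
    (Dop p).eval x = p.eval (x + 1) - p.eval x := by
  simp [Dop_apply, taylor_eval]

lemma Dop_pow_succ (j : ℕ) (p : Polynomial ℚ) :
    (Dop ^ (j + 1)) p = Dop ((Dop ^ j) p) := by
  rw [pow_succ']; rfl

lemma Dop_pow_succ' (j : ℕ) (p : Polynomial ℚ) :
    (Dop ^ (j + 1)) p = (Dop ^ j) (Dop p) := by
  rw [pow_succ]; rfl

lemma taylor_ne_zero (p : Polynomial ℚ) (hp : p ≠ 0) : taylor (1:ℚ) p ≠ 0 := by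
  intro h
  have : taylor (-1:ℚ) (taylor (1:ℚ) p) = 0 := by rw [h, map_zero]
  rw [taylor_taylor] at this
  simp at this
  exact hp this

lemma leadingCoeff_taylor (p : Polynomial ℚ) : (taylor (1:ℚ) p).leadingCoeff = p.leadingCoeff := by
  rcases eq_or_ne p 0 with rfl | hp0
  · simp
  rcases Nat.eq_zero_or_pos p.natDegree with h0 | h1
  · obtain ⟨a, ha⟩ := (p.natDegree_eq_zero).mp h0
    rw [← ha, taylor_C]
  · rw [taylor_apply, leadingCoeff_comp (by rw [natDegree_X_add_C]; exact one_ne_zero),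
      leadingCoeff_X_add_C, one_pow, mul_one]

lemma degree_taylor' (p : Polynomial ℚ) : (taylor (1:ℚ) p).degree = p.degree := by
  rcases eq_or_ne p 0 with rfl | hp0
  · simp
  · rw [degree_eq_natDegree (taylor_ne_zero p hp0), degree_eq_natDegree hp0, natDegree_taylor]

/-- `Δ^m p = 0` when `natDegree p < m`. -/
lemma Dop_pow_eq_zero : ∀ (m : ℕ) (p : Polynomial ℚ), p.natDegree < m → (Dop ^ m) p = 0 := by
  intro m
  induction m with
  | zero => intro p hp; exact absurd hp (Nat.not_lt_zero _)
  | succ m ih =>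
    intro p hp
    rw [Dop_pow_succ']
    rcases eq_or_ne p 0 with rfl | hp0
    · rw [Dop_apply]; simp
    rcases Nat.eq_zero_or_pos p.natDegree with h0 | h1
    · obtain ⟨a, ha⟩ := (p.natDegree_eq_zero).mp h0
      rw [Dop_apply, ← ha, taylor_C, sub_self, map_zero]
    · apply ih
      rcases eq_or_ne (Dop p) 0 with hD0 | hD0
    
      · rw [hD0]; simp only [natDegree_zero]; omega
      · have hdeg : (Dop p).degree < p.degree := by
          rw [Dop_apply]
          have := degree_sub_lt (degree_taylor' p) (taylor_ne_zero p hp0) (leadingCoeff_taylor p)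
          rwa [degree_taylor'] at this
        have := (natDegree_lt_natDegree_iff hD0).mpr hdeg
        omega
lemma T_succ (f : ℚ → ℚ) (j : ℕ) (x : ℚ) :
    ∑ i ∈ range (j + 2), (-1:ℚ) ^ i * ((j+1).choose i : ℚ) * f (x + i)
      = (∑ i ∈ range (j + 1), (-1:ℚ) ^ i * (j.choose i : ℚ) * f (x + i))
        - ∑ i ∈ range (j + 1), (-1:ℚ) ^ i * (j.choose i : ℚ) * f (x + 1 + i) := by
  rw [Finset.sum_range_succ' (fun i => (-1:ℚ) ^ i * ((j+1).choose i : ℚ) * f (x + i)) (j+1)]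
  have hsplit : ∀ i, ((j+1).choose (i+1) : ℚ) = (j.choose i : ℚ) + (j.choose (i+1) : ℚ) := by
    intro i; rw [Nat.choose_succ_succ]; push_cast; ring
  have h2 : (∑ i ∈ range (j + 1), (-1:ℚ) ^ (i+1) * ((j+1).choose (i+1) : ℚ) * f (x + (i+1 : ℕ)))
      = (- ∑ i ∈ range (j + 1), (-1:ℚ) ^ i * (j.choose i : ℚ) * f (x + 1 + i))
        + (- ∑ i ∈ range (j + 1), (-1:ℚ) ^ i * (j.choose (i+1) : ℚ) * f (x + (i+1 : ℕ))) := by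
    rw [← neg_add, ← Finset.sum_add_distrib, ← Finset.sum_neg_distrib]
    apply sum_congr rfl
    intro i hi
    rw [hsplit i]
    have : x + ((i:ℕ)+1 : ℕ) = x + 1 + i := by push_cast; ring
    rw [this]
    ring
  rw [h2]
  have h3 : (∑ i ∈ range (j + 1), (-1:ℚ) ^ i * (j.choose (i+1) : ℚ) * f (x + (i+1 : ℕ)))
      = ∑ i ∈ range j, (-1:ℚ) ^ i * (j.choose (i+1) : ℚ) * f (x + (i+1 : ℕ)) := by
    rw [Finset.sum_range_succ]
    simp [Nat.choose_succ_self]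
  have h4 : (∑ i ∈ range (j + 1), (-1:ℚ) ^ i * (j.choose i : ℚ) * f (x + i))
      = (∑ i ∈ range j, (-1:ℚ) ^ (i+1) * (j.choose (i+1) : ℚ) * f (x + (i+1:ℕ)))
        + (-1:ℚ)^0 * (j.choose 0 : ℚ) * f (x + (0:ℕ)) := by
    exact Finset.sum_range_succ' (fun i => (-1:ℚ) ^ i * (j.choose i : ℚ) * f (x + i)) j
  rw [h3, h4]
  have h5 : (∑ i ∈ range j, (-1:ℚ) ^ (i+1) * (j.choose (i+1) : ℚ) * f (x + (i+1:ℕ)))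
      = - ∑ i ∈ range j, (-1:ℚ) ^ i * (j.choose (i+1) : ℚ) * f (x + (i+1:ℕ)) := by
    rw [← Finset.sum_neg_distrib]; apply sum_congr rfl; intro i hi; ring
  rw [h5]
  simp
  ring

lemma Dop_pow_eval' (p : Polynomial ℚ) : ∀ (j : ℕ) (x : ℚ),
    ((Dop ^ j) p).eval x
      = (-1:ℚ)^j * ∑ i ∈ range (j + 1), (-1 : ℚ) ^ i * (j.choose i : ℚ) * p.eval (x + i) := by
  intro j
  induction j with
  | zero => intro x; simp
  | succ j ih =>
    intro x
    rw [Dop_pow_succ, Dop_eval, ih, ih, T_succ (fun y => p.eval y) j x]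
    ring

lemma Dop_pow_eval (p : Polynomial ℚ) (j : ℕ) (x : ℚ) :
    ((Dop ^ j) p).eval x
      = ∑ i ∈ range (j + 1), (-1 : ℚ) ^ (j - i) * (j.choose i : ℚ) * p.eval (x + i) := by
  rw [Dop_pow_eval', Finset.mul_sum]
  apply sum_congr rfl
  intro i hi
  have hij : i ≤ j := Nat.lt_succ_iff.mp (mem_range.mp hi)
  have hsign : (-1:ℚ) ^ (j - i) = (-1:ℚ)^j * (-1:ℚ)^i := by
    rw [← pow_add, show j + i = (j - i) + 2*i from by omega, pow_add, pow_mul]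
    simp
  rw [hsign]; ring

lemma Dop_taylor_comm (q : Polynomial ℚ) : Dop (taylor (1:ℚ) q) = taylor (1:ℚ) (Dop q) := by
  rw [Dop_apply, Dop_apply, map_sub]

lemma Dop_pow_taylor_comm (j : ℕ) (q : Polynomial ℚ) :
    (Dop ^ j) (taylor (1:ℚ) q) = taylor (1:ℚ) ((Dop ^ j) q) := by
  induction j with
  | zero => simp
  | succ j ih => rw [Dop_pow_succ, ih, Dop_taylor_comm, Dop_pow_succ]

lemma Dop_mul_X (q : Polynomial ℚ) : Dop (X * q) = X * Dop q + taylor (1:ℚ) q := by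
  rw [Dop_apply, Dop_apply, taylor_mul, taylor_X]
  ring_nf
  rw [C_1]
  ring

lemma Dop_pow_mul_X (q : Polynomial ℚ) : ∀ j : ℕ,
    (Dop ^ (j+1)) (X * q) = X * (Dop ^ (j+1)) q + ((j+1 : ℕ) : ℚ) • taylor (1:ℚ) ((Dop ^ j) q) := by
  intro j
  induction j with
  | zero => simpa using Dop_mul_X q
  | succ j ih =>
    rw [Dop_pow_succ (j+1), ih, map_add, map_smul, Dop_mul_X, Dop_taylor_comm,
      ← Dop_pow_succ, ← Dop_pow_succ]
    push_cast
    module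

lemma Dop_telescope (m : ℕ) (g : Polynomial ℚ) (hg : (Dop ^ m) g = 0) :
    ∑ t ∈ range m, (-1:ℚ) ^ t • (Dop ^ t) g = taylor (-1:ℚ) g := by
  set T := ∑ t ∈ range m, (-1:ℚ) ^ t • (Dop ^ t) g with hT
  have key : taylor (1:ℚ) T = g := by
    have hDT : taylor (1:ℚ) T = T + Dop T := by rw [Dop_apply]; ring
    have hDopT : Dop T = ∑ t ∈ range m, (-1:ℚ) ^ t • (Dop ^ (t+1)) g := by
      rw [hT, map_sum]
      apply sum_congr rfl
      intro t _
      rw [map_smul, Dop_pow_succ]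
    rw [hDT, hDopT, hT]
    rcases Nat.eq_zero_or_pos m with rfl | hm
    · simp at hg ⊢; exact hg.symm
    obtain ⟨n, rfl⟩ : ∃ n, m = n + 1 := ⟨m - 1, by omega⟩
    rw [Finset.sum_range_succ' (fun t => (-1:ℚ) ^ t • (Dop ^ t) g) n,
        Finset.sum_range_succ (fun t => (-1:ℚ) ^ t • (Dop ^ (t+1)) g) n]
    rw [hg, smul_zero, add_zero]
    simp only [pow_zero, one_smul, Module.End.one_apply]
    have hAB : (∑ t ∈ range n, (-1:ℚ) ^ (t+1) • (Dop ^ (t+1)) g)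
        + ∑ t ∈ range n, (-1:ℚ) ^ t • (Dop ^ (t+1)) g = 0 := by
      rw [← Finset.sum_add_distrib]
      apply Finset.sum_eq_zero
      intro t _
      rw [pow_succ]
      module
    rw [add_right_comm, hAB, zero_add]
  have := congrArg (taylor (-1:ℚ)) key
  rwa [taylor_taylor, neg_add_cancel, taylor_zero] at this

/-- Newton series for the derivative: `∑_{t<m+1} ((-1)^t/(t+1)) Δ^{t+1} X^{m+1} = (m+1) X^m`. -/
lemma newton_derivative : ∀ m : ℕ,
    ∑ t ∈ range (m+1), ((-1:ℚ) ^ t / (t+1)) • (Dop ^ (t+1)) (X ^ (m+1) : Polynomial ℚ)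
      = ((m+1 : ℕ) : ℚ) • (X ^ m : Polynomial ℚ) := by
  intro m
  induction m with
  | zero =>
    simp only [range_one, sum_singleton, pow_zero, pow_one]
    norm_num
    rw [Dop_apply, taylor_X]
    simp
  | succ m ih =>
    have hXpow : (X ^ (m+2) : Polynomial ℚ) = X * X ^ (m+1) := by ring
    calc ∑ t ∈ range (m+2), ((-1:ℚ) ^ t / (t+1)) • (Dop ^ (t+1)) (X ^ (m+2) : Polynomial ℚ)
        = ∑ t ∈ range (m+2), (((-1:ℚ) ^ t / (t+1)) • (X * (Dop ^ (t+1)) (X ^ (m+1) : Polynomial ℚ))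
            + (-1:ℚ) ^ t • taylor (1:ℚ) ((Dop ^ t) (X ^ (m+1) : Polynomial ℚ))) := by
          apply sum_congr rfl
          intro t _
          rw [hXpow, Dop_pow_mul_X, smul_add, smul_smul]
          congr 1
          have ht : (t:ℚ) + 1 ≠ 0 := by positivity
          congr 1
          push_cast
          field_simp
      _ = X * (∑ t ∈ range (m+2), ((-1:ℚ) ^ t / (t+1)) • (Dop ^ (t+1)) (X ^ (m+1) : Polynomial ℚ))
            + taylor (1:ℚ) (∑ t ∈ range (m+2), (-1:ℚ) ^ t • (Dop ^ t) (X ^ (m+1) : Polynomial ℚ)) := by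
          rw [Finset.sum_add_distrib, Finset.mul_sum, map_sum]
          congr 1
          · apply sum_congr rfl; intro t _; rw [mul_smul_comm]
          · apply sum_congr rfl; intro t _; rw [map_smul]
      _ = X * (((m+1 : ℕ) : ℚ) • (X ^ m : Polynomial ℚ)) + taylor (1:ℚ) (taylor (-1:ℚ) (X ^ (m+1) : Polynomial ℚ)) := by
          congr 1
          · congr 1
            rw [Finset.sum_range_succ, Dop_pow_eq_zero (m+2) _ (by simp), smul_zero, add_zero, ih]
          · congr 1
            exact Dop_telescope (m+2) _ (Dop_pow_eq_zero (m+2) _ (by simp))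
      _ = ((m+2 : ℕ) : ℚ) • (X ^ (m+1) : Polynomial ℚ) := by
          rw [taylor_taylor, add_neg_cancel, taylor_zero, mul_smul_comm, ← pow_succ']
          push_cast
          module

/-- Candidate polynomial. -/
noncomputable def Rpoly (k : ℕ) : Polynomial ℚ :=
  ∑ j ∈ range (k+1), ((-1:ℚ) ^ j / (j+1)) • (Dop ^ j) (X ^ k : Polynomial ℚ)

lemma Rpoly_ext (n i : ℕ) (hi : i ≤ n) :
    Rpoly i = ∑ j ∈ range (n+1), ((-1:ℚ) ^ j / (j+1)) • (Dop ^ j) (X ^ i : Polynomial ℚ) := by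
  rw [Rpoly]
  apply Finset.sum_subset
  · intro j hj
    rw [mem_range] at *
    omega
  · intro j _ hj
    rw [mem_range, not_lt] at hj
    rw [Dop_pow_eq_zero j _ (by rw [natDegree_X_pow]; omega), smul_zero]

lemma binom_sum_eq (n : ℕ) :
    ∑ i ∈ range (n+1), ((n+1).choose i : ℚ) • (X ^ i : Polynomial ℚ)
      = Dop (X ^ (n+1) : Polynomial ℚ) := by
  rw [Dop_apply, taylor_apply, X_pow_comp, C_1, add_pow]
  have h : ∑ i ∈ range (n+2), (X:Polynomial ℚ) ^ i * 1 ^ (n+1-i) * ((n+1).choose i : Polynomial ℚ)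
      = (∑ i ∈ range (n+1), (X:Polynomial ℚ) ^ i * 1 ^ (n+1-i) * ((n+1).choose i : Polynomial ℚ)) + X ^ (n+1) := by
    rw [Finset.sum_range_succ]
    simp
  rw [h, add_sub_cancel_right]
  apply sum_congr rfl
  intro i _
  rw [one_pow, mul_one, smul_eq_C_mul]
  rw [Polynomial.C_eq_natCast]
  ring

lemma Rpoly_recurrence (n : ℕ) :
    ∑ i ∈ range (n+1), ((n+1).choose i : ℚ) • Rpoly i = monomial n ((n:ℚ)+1) := by
  calc ∑ i ∈ range (n+1), ((n+1).choose i : ℚ) • Rpoly i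
      = ∑ i ∈ range (n+1), ∑ j ∈ range (n+1),
          ((n+1).choose i : ℚ) • (((-1:ℚ) ^ j / (j+1)) • (Dop ^ j) (X ^ i : Polynomial ℚ)) := by
        apply sum_congr rfl
        intro i hi
        rw [Rpoly_ext n i (Nat.lt_succ_iff.mp (mem_range.mp hi)), Finset.smul_sum]
    _ = ∑ j ∈ range (n+1), ∑ i ∈ range (n+1),
          ((n+1).choose i : ℚ) • (((-1:ℚ) ^ j / (j+1)) • (Dop ^ j) (X ^ i : Polynomial ℚ)) :=
        Finset.sum_comm
    _ = ∑ j ∈ range (n+1), ((-1:ℚ) ^ j / (j+1)) •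
          (Dop ^ j) (∑ i ∈ range (n+1), ((n+1).choose i : ℚ) • (X ^ i : Polynomial ℚ)) := by
        apply sum_congr rfl
        intro j _
        rw [map_sum, Finset.smul_sum]
        apply sum_congr rfl
        intro i _
        rw [map_smul, smul_comm]
    _ = ∑ j ∈ range (n+1), ((-1:ℚ) ^ j / (j+1)) • (Dop ^ (j+1)) (X ^ (n+1) : Polynomial ℚ) := by
        apply sum_congr rfl
        intro j _
        rw [binom_sum_eq, ← Dop_pow_succ']
    _ = ((n+1 : ℕ) : ℚ) • (X ^ n : Polynomial ℚ) := newton_derivative n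
    _ = monomial n ((n:ℚ)+1) := by
        rw [smul_X_eq_monomial]
        push_cast
        ring_nf

lemma bernoulli_eq_Rpoly : ∀ k : ℕ, Polynomial.bernoulli k = Rpoly k := by
  intro k
  induction k using Nat.strong_induction_on with
  | _ k ih =>
    rcases k with _ | n
    · rw [Polynomial.bernoulli_zero, Rpoly]
      simp
    · have hB := Polynomial.sum_bernoulli (n+1)
      have hR := Rpoly_recurrence (n+1)
      rw [Finset.sum_range_succ] at hB hR
      have hlow : ∑ i ∈ range (n+1), ((n+1+1).choose i : ℚ) • Polynomial.bernoulli i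
          = ∑ i ∈ range (n+1), ((n+1+1).choose i : ℚ) • Rpoly i := by
        apply sum_congr rfl
        intro i hi
        rw [ih i (by rw [mem_range] at hi; omega)]
      have : ((n+1+1).choose (n+1) : ℚ) • Polynomial.bernoulli (n+1)
          = ((n+1+1).choose (n+1) : ℚ) • Rpoly (n+1) := by
        have e1 := hB.trans hR.symm
        rw [hlow] at e1
        exact add_left_cancel e1
      have hne : ((n+1+1).choose (n+1) : ℚ) ≠ 0 := by
        rw [Nat.choose_succ_self_right]
        positivity
      exact smul_right_injective (Polynomial ℚ) hne this

/-- The `r`-Whitney numbers of the second kind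
`W_{m,r}(k,j) = (1/(m^j j!)) Σ_{i=0}^{j} (-1)^{j-i} C(j,i) (mi + r)^k`. -/
def rWhitney (m r k j : ℕ) : ℚ :=
  (1 / ((m : ℚ) ^ j * (Nat.factorial j : ℚ))) *
    ∑ i ∈ Finset.range (j + 1),
      (-1 : ℚ) ^ (j - i) * (Nat.choose j i : ℚ) * ((m : ℚ) * i + r) ^ k

/-- `B_k(r/m) = Σ_{j=0}^{k} (-1)^j (j!/(j+1)) W_{m,r}(k,j)/m^{k-j}`. -/
theorem bernoulli_poly_eval_div_eq_whitney (m r k : ℕ) (hm : 1 ≤ m) :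
    (Polynomial.bernoulli k).eval ((r : ℚ) / m) =
      ∑ j ∈ Finset.range (k + 1),
        (-1 : ℚ) ^ j * ((Nat.factorial j : ℚ) / (j + 1)) *
          rWhitney m r k j / (m : ℚ) ^ (k - j) := by
  have hm0 : (m : ℚ) ≠ 0 := Nat.cast_ne_zero.mpr (by omega)
  rw [bernoulli_eq_Rpoly, Rpoly, Polynomial.eval_finset_sum]
  apply sum_congr rfl
  intro j hj
  have hjk : j ≤ k := Nat.lt_succ_iff.mp (mem_range.mp hj)
  have hpow : (m:ℚ) ^ (k - j) * (m:ℚ) ^ j = (m:ℚ) ^ k := by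
    rw [← pow_add]; congr 1; omega
  rw [Polynomial.eval_smul, Dop_pow_eval, rWhitney]
  have hinner : ∑ i ∈ range (j + 1),
        (-1 : ℚ) ^ (j - i) * (j.choose i : ℚ) * ((m : ℚ) * i + r) ^ k
      = (m:ℚ) ^ (k - j) * (m:ℚ) ^ j *
        ∑ i ∈ range (j + 1),
          (-1 : ℚ) ^ (j - i) * (j.choose i : ℚ) * (((r:ℚ)/m + i) ^ k) := by
    rw [Finset.mul_sum]
    apply sum_congr rfl
    intro i _
    rw [hpow, show ((m:ℚ) * i + r) = (m:ℚ) * ((r:ℚ)/m + i) from by field_simp; ring,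
      mul_pow]
    ring
  rw [hinner]
  simp only [Polynomial.eval_pow, Polynomial.eval_X, smul_eq_mul]
  have hfac : (Nat.factorial j : ℚ) ≠ 0 := Nat.cast_ne_zero.mpr (Nat.factorial_ne_zero j)
  have hj1 : (j:ℚ) + 1 ≠ 0 := by positivity
  field_simp
end

section
/- For all integers m ≥ 1, r ≥ 0, k ≥ 0, and n ≥ 1, the power sum S_k^{m,r}(n) = Σ_{ℓ=0}^{n-1} (ℓm + r)^k satisfies S_k^{m,r}(n) = Σ_{j=0}^{k} m^j · j! · W_{m,r}(k, j) · C(n, j+1), where W_{m,r}(k,j) are the r-Whitney numbers of the second kind and C(n, j+1) is the ordinary binomial coefficient. -/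
open Finset

/-- Finite differences of a degree-`k` polynomial vanish after more than `k` steps. -/
lemma fwdDiff_iter_pow_vanish (m r : ℕ) :
    ∀ k j : ℕ, k < j →
      (fwdDiff 1)^[j] (fun ℓ : ℕ => ((ℓ : ℚ) * m + r) ^ k) = 0 := by
  intro k
  induction k using Nat.strong_induction_on with
  | _ k IH =>
    intro j hkj
    match j, hkj with
    | j' + 1, hkj =>
    rw [Function.iterate_succ_apply]
    have hΔ : fwdDiff 1 (fun ℓ : ℕ => ((ℓ : ℚ) * m + r) ^ k) =
        ∑ t ∈ range k, ((Nat.choose k t : ℚ) * (m : ℚ) ^ (k - t)) •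
          (fun ℓ : ℕ => ((ℓ : ℚ) * m + r) ^ t) := by
      funext ℓ
      simp only [fwdDiff, Finset.sum_apply, Pi.smul_apply, smul_eq_mul]
      push_cast
      have h1 : ((ℓ : ℚ) + 1) * m + r = ((ℓ : ℚ) * m + r) + m := by ring
      rw [h1, add_pow, Finset.sum_range_succ]
      simp only [Nat.sub_self, pow_zero, Nat.choose_self, Nat.cast_one, mul_one]
      rw [add_sub_cancel_right]
      exact Finset.sum_congr rfl fun t _ => by ring
    rw [hΔ, fwdDiff_iter_finset_sum]
    have hz : ∀ t ∈ range k, (fwdDiff 1)^[j']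
        (((Nat.choose k t : ℚ) * (m : ℚ) ^ (k - t)) •
          (fun ℓ : ℕ => ((ℓ : ℚ) * m + r) ^ t)) = 0 := by
      intro t ht
      rw [fwdDiff_iter_const_smul]
      have ht' : t < j' := by
        have := Finset.mem_range.mp ht
        omega
      rw [IH t (Finset.mem_range.mp ht) j' ht', smul_zero]
    rw [Finset.sum_congr rfl hz, Finset.sum_const_zero]

lemma whitney_coeff_eq_fwdDiff (m r k j : ℕ) (hm : 1 ≤ m) :
    (m : ℚ) ^ j * (Nat.factorial j : ℚ) * rWhitney m r k j =
      (fwdDiff 1)^[j] (fun ℓ : ℕ => ((ℓ : ℚ) * m + r) ^ k) 0 := by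
  have hm0 : (m : ℚ) ≠ 0 := by positivity
  have hne : ((m : ℚ) ^ j * (Nat.factorial j : ℚ)) ≠ 0 := by positivity
  rw [rWhitney, ← mul_assoc, mul_one_div, div_self hne, one_mul,
    fwdDiff_iter_eq_sum_shift]
  refine Finset.sum_congr rfl fun i _ => ?_
  simp only [zsmul_eq_mul, zero_add, Nat.smul_one_eq_cast]
  push_cast
  ring

/-- `S_k^{m,r}(n) = Σ_{j=0}^{k} m^j j! W_{m,r}(k,j) C(n, j+1)`. -/
theorem power_sum_eq_whitney_binomial (m r k n : ℕ) (hm : 1 ≤ m) (hn : 1 ≤ n) :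
    ∑ ℓ ∈ Finset.range n, ((ℓ : ℚ) * m + r) ^ k =
      ∑ j ∈ Finset.range (k + 1),
        (m : ℚ) ^ j * (Nat.factorial j : ℚ) * rWhitney m r k j *
          (Nat.choose n (j + 1) : ℚ) := by
  have hD := fun j => (whitney_coeff_eq_fwdDiff m r k j hm).symm
  have hvan : ∀ j : ℕ, k < j →
      (fwdDiff 1)^[j] (fun ℓ : ℕ => ((ℓ : ℚ) * m + r) ^ k) 0 = 0 := by
    intro j hj
    rw [fwdDiff_iter_pow_vanish m r k j hj]
    rfl
  -- Gregory–Newton expansion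
  have hnewton : ∀ ℓ : ℕ, ((ℓ : ℚ) * m + r) ^ k =
      ∑ j ∈ range (ℓ + 1), (Nat.choose ℓ j : ℚ) *
        (fwdDiff 1)^[j] (fun ℓ : ℕ => ((ℓ : ℚ) * m + r) ^ k) 0 := by
    intro ℓ
    have := shift_eq_sum_fwdDiff_iter 1 (fun ℓ : ℕ => ((ℓ : ℚ) * m + r) ^ k) ℓ 0
    simp only [zero_add, smul_eq_mul, Nat.smul_one_eq_cast] at this
    simpa using this
  set D : ℕ → ℚ := fun j => (fwdDiff 1)^[j] (fun ℓ : ℕ => ((ℓ : ℚ) * m + r) ^ k) 0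
  -- swap sums + hockey stick
  have key : ∑ ℓ ∈ range n, ((ℓ : ℚ) * m + r) ^ k
      = ∑ j ∈ range n, D j * (Nat.choose n (j + 1) : ℚ) := by
    calc ∑ ℓ ∈ range n, ((ℓ : ℚ) * m + r) ^ k
        = ∑ ℓ ∈ range n, ∑ j ∈ range n,
            if j ≤ ℓ then (Nat.choose ℓ j : ℚ) * D j else 0 := by
          refine Finset.sum_congr rfl fun ℓ hℓ => ?_
          rw [hnewton ℓ, Finset.sum_ite, Finset.sum_const_zero, add_zero]
          congr 1
          ext j
          simp only [Finset.mem_filter, Finset.mem_range]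
          have := Finset.mem_range.mp hℓ
          omega
      _ = ∑ j ∈ range n, ∑ ℓ ∈ range n,
            if j ≤ ℓ then (Nat.choose ℓ j : ℚ) * D j else 0 := Finset.sum_comm
      _ = ∑ j ∈ range n, D j * (Nat.choose n (j + 1) : ℚ) := by
          refine Finset.sum_congr rfl fun j hj => ?_
          rw [Finset.sum_ite, Finset.sum_const_zero, add_zero]
          have hfil : (range n).filter (fun ℓ => j ≤ ℓ) = Finset.Ico j n := by
            ext ℓ; simp [Finset.mem_Ico, and_comm]
          rw [hfil, ← Finset.sum_mul, mul_comm]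
          congr 1
          have hIco : Finset.Ico j n = Finset.Icc j (n - 1) := by
            congr 1
            omega
          rw [hIco, ← Nat.cast_sum, Nat.sum_Icc_choose]
          congr 2
          omega
  rw [key]
  -- reconcile the summation ranges
  have h1 : ∑ j ∈ range n, D j * (Nat.choose n (j + 1) : ℚ)
      = ∑ j ∈ range (max n (k + 1)), D j * (Nat.choose n (j + 1) : ℚ) := by
    refine Finset.sum_subset (Finset.range_subset_range.mpr (le_max_left _ _)) ?_
    intro j _ hj
    rw [Nat.choose_eq_zero_of_lt (by
      have := Finset.mem_range.not.mp hj
      omega), Nat.cast_zero, mul_zero]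
  have h2 : ∑ j ∈ range (k + 1),
      (m : ℚ) ^ j * (Nat.factorial j : ℚ) * rWhitney m r k j * (Nat.choose n (j + 1) : ℚ)
      = ∑ j ∈ range (max n (k + 1)),
        (m : ℚ) ^ j * (Nat.factorial j : ℚ) * rWhitney m r k j * (Nat.choose n (j + 1) : ℚ) := by
    refine Finset.sum_subset (Finset.range_subset_range.mpr (le_max_right _ _)) ?_
    intro j _ hj
    rw [← hD j]
    rw [show ((fwdDiff 1)^[j] (fun ℓ : ℕ => ((ℓ : ℚ) * m + r) ^ k) 0) = 0 from
      hvan j (by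
        have := Finset.mem_range.not.mp hj
        omega), zero_mul]
  rw [h1, h2]
  exact Finset.sum_congr rfl fun j _ => by rw [← hD j]
end
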